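/- Let A ⊂ S^n be star-shaped on S^n with center g ∈ σ(A) lying in the interior A° of A, where -g ∉ A. Then for every x on the boundary ∂A, the geodesic G(x, -g) connecting x to -g does not intersect the interior A°. -/

import Mathlib

open scoped RealInnerProductSpace Classical

variable {n : ℕ}

/-- The unit `n`-sphere in `ℝ^{n+1}`. -/
noncomputable def unitSphere (n : ℕ) : Set (EuclideanSpace ℝ (Fin (n + 1))) :=
  Metric.sphere (0 : EuclideanSpace ℝ (Fin (n + 1))) 1

/-- The (unique, minimizing) geodesic on `Sⁿ` connecting `a` and `b` (for `a ≠ -b`),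
given by `g(λ) = (sin((1-λ)θ) a + sin(λθ) b)/sin θ`, `λ ∈ [0,1]`, `θ = arccos(aᵀb)`;
for `a = b` it is the singleton `{a}`. -/

noncomputable def sphGeodesic (a b : EuclideanSpace ℝ (Fin (n + 1))) :
    Set (EuclideanSpace ℝ (Fin (n + 1))) :=
  if a = b then {a}
  else
    {x | ∃ l ∈ Set.Icc (0 : ℝ) 1,
      x = (Real.sin ((1 - l) * Real.arccos ⟪a, b⟫) / Real.sin (Real.arccos ⟪a, b⟫)) • a
        + (Real.sin (l * Real.arccos ⟪a, b⟫) / Real.sin (Real.arccos ⟪a, b⟫)) • b}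

/-- The interior of `A` relative to the sphere `Sⁿ`. -/
def sphInterior (n : ℕ) (A : Set (EuclideanSpace ℝ (Fin (n + 1)))) :
    Set (EuclideanSpace ℝ (Fin (n + 1))) :=
  {x | x ∈ unitSphere n ∧ ∃ U : Set (EuclideanSpace ℝ (Fin (n + 1))),
    IsOpen U ∧ x ∈ U ∧ U ∩ unitSphere n ⊆ A}

/-- The boundary of `A` relative to the sphere `Sⁿ` (closure minus interior on `Sⁿ`). -/
def sphBoundary (n : ℕ) (A : Set (EuclideanSpace ℝ (Fin (n + 1)))) :
    Set (EuclideanSpace ℝ (Fin (n + 1))) :=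
  (closure A ∩ unitSphere n) \ sphInterior n A

lemma sphInterior_subset (n : ℕ) (A : Set (EuclideanSpace ℝ (Fin (n + 1)))) :
    sphInterior n A ⊆ A := by
  rintro x ⟨hxS, U, hU, hxU, hUA⟩
  exact hUA ⟨hxU, hxS⟩

/-- A point at angle `a ∈ [0, β]` from `g` along the great circle towards `z`
(at angle `β` from `g`) lies on the geodesic from `g` to `z`. -/
lemma mem_sphGeodesic_of (g z : EuclideanSpace ℝ (Fin (n + 1)))
    (hg : ‖g‖ = 1) (β a : ℝ) (hβ0 : 0 < β) (hβπ : β < Real.pi)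
    (ha0 : 0 ≤ a) (haβ : a ≤ β) (hgz : ⟪g, z⟫ = Real.cos β) :
    Real.cos a • g + (Real.sin a / Real.sin β) • (z - Real.cos β • g)
      ∈ sphGeodesic g z := by
  have hβcos : Real.cos β < 1 := by
    have := Real.cos_lt_cos_of_nonneg_of_le_pi le_rfl hβπ.le hβ0
    simpa using this
  have hne : g ≠ z := by
    intro h
    rw [← h, real_inner_self_eq_norm_sq, hg] at hgz
    norm_num at hgz
    linarith
  have hsinβ : 0 < Real.sin β := Real.sin_pos_of_pos_of_lt_pi hβ0 hβπ
  rw [sphGeodesic, if_neg hne, Set.mem_setOf_eq]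
  refine ⟨a / β, ⟨div_nonneg ha0 hβ0.le, (div_le_one hβ0).2 haβ⟩, ?_⟩
  rw [hgz, Real.arccos_cos hβ0.le hβπ.le]
  have h1 : (1 - a / β) * β = β - a := by field_simp
  have h2 : a / β * β = a := by field_simp
  rw [h1, h2]
  have h3 : Real.sin (β - a) / Real.sin β
      = Real.cos a - Real.sin a * Real.cos β / Real.sin β := by
    rw [Real.sin_sub]; field_simp
  rw [h3]
  module

/-- Lemma 1: Let `A ⊂ Sⁿ` be star-shaped on `Sⁿ` with center `g ∈ σ(A)` lying in the
interior of `A` on `Sⁿ` (where `-g ∉ A`). Then for every `x ∈ ∂A`, the geodesic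
`G(x, -g)` does not intersect the interior `A°`. -/
theorem geodesic_to_antipode_avoids_interior (n : ℕ)
    (A : Set (EuclideanSpace ℝ (Fin (n + 1)))) (hA : A ⊆ unitSphere n)
    (g : EuclideanSpace ℝ (Fin (n + 1)))
    (hgA : g ∈ A) (hgNeg : -g ∉ A)
    (hgStar : ∀ x ∈ A, sphGeodesic g x ⊆ A)
    (hgInt : g ∈ sphInterior n A) :
    ∀ x ∈ sphBoundary n A, sphGeodesic x (-g) ∩ sphInterior n A = ∅ := by
  intro x hx
  rw [Set.eq_empty_iff_forall_notMem]
  rintro y ⟨hy1, hy2⟩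
  have hxS : x ∈ unitSphere n := hx.1.2
  have hxnI : x ∉ sphInterior n A := hx.2
  have hgS : g ∈ unitSphere n := hA hgA
  have hgnorm : ‖g‖ = 1 := mem_sphere_zero_iff_norm.mp hgS
  have hxnorm : ‖x‖ = 1 := mem_sphere_zero_iff_norm.mp hxS
  have hyA : y ∈ A := sphInterior_subset n A hy2
  -- x ≠ g and x ≠ -g
  have hxg : x ≠ g := fun h => hxnI (h ▸ hgInt)
  have hxng : x ≠ -g := by
    intro h
    subst h
    rw [sphGeodesic, if_pos rfl] at hy1
    simp only [Set.mem_singleton_iff] at hy1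
    exact hgNeg (hy1 ▸ hyA)
  -- unfold the geodesic membership
  rw [sphGeodesic, if_neg hxng, Set.mem_setOf_eq] at hy1
  obtain ⟨l, ⟨hl0, hl1⟩, hy⟩ := hy1
  -- basic inner product facts
  set c : ℝ := ⟪g, x⟫ with hc
  have hxgi : ⟪x, -g⟫ = -c := by
    rw [inner_neg_right, hc, real_inner_comm]
  have hcabs : |c| ≤ 1 := by
    have := abs_real_inner_le_norm g x
    rwa [hgnorm, hxnorm, one_mul] at this
  have hc1 : c < 1 := by
    rcases lt_or_eq_of_le (abs_le.mp hcabs).2 with h | h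
    · exact h
    · exact absurd ((inner_eq_one_iff_of_norm_eq_one hgnorm hxnorm).mp (by rw [← hc, h])).symm hxg
  have hcm1 : -1 < c := by
    rcases lt_or_eq_of_le (abs_le.mp hcabs).1 with h | h
    · exact h
    · exfalso
      apply hxng
      have hng : ‖-g‖ = 1 := by rwa [norm_neg]
      exact (inner_eq_one_iff_of_norm_eq_one hxnorm hng).mp (by rw [hxgi, ← h]; ring)
  set α : ℝ := Real.arccos c with hα
  have hα0 : 0 < α := Real.arccos_pos.mpr hc1
  have hαπ : α < Real.pi := by
    rcases lt_or_eq_of_le (Real.arccos_le_pi c) with h | h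
    · exact h
    · exact absurd (Real.arccos_eq_pi.mp h) (by linarith)
  have hcosα : Real.cos α = c := by
    rw [hα]; exact Real.cos_arccos (abs_le.1 hcabs).1 (abs_le.1 hcabs).2
  have hsinα : Real.sin α = Real.sqrt (1 - c ^ 2) := Real.sin_arccos c
  have hsinα0 : 0 < Real.sin α := Real.sin_pos_of_pos_of_lt_pi hα0 hαπ
  have hθ : Real.arccos ⟪x, -g⟫ = Real.pi - α := by
    rw [hxgi, Real.arccos_neg, hα]
  rw [hθ] at hy
  have hsinθ : Real.sin (Real.pi - α) = Real.sin α := Real.sin_pi_sub α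
  -- rule out l = 0 and l = 1
  have hl0' : 0 < l := by
    rcases lt_or_eq_of_le hl0 with h | h
    · exact h
    · exfalso
      apply hxnI
      have : y = x := by
        rw [hy, ← h]
        rw [show (1 - (0:ℝ)) * (Real.pi - α) = Real.pi - α by ring, hsinθ]
        simp [div_self hsinα0.ne']
      exact this ▸ hy2
  have hl1' : l < 1 := by
    rcases lt_or_eq_of_le hl1 with h | h
    · exact h
    · exfalso
      apply hgNeg
      have : y = -g := by
        rw [hy, h]
        rw [show (1 - (1:ℝ)) * (Real.pi - α) = 0 by ring, hsinθ, one_mul, hsinθ]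
        simp [div_self hsinα0.ne']
      exact this ▸ hyA
  -- the angle β from g to y
  set β : ℝ := α + l * (Real.pi - α) with hβ
  have hαβ : α < β := by
    have : 0 < l * (Real.pi - α) := mul_pos hl0' (by linarith)
    linarith
  have hβ0 : 0 < β := lt_trans hα0 hαβ
  have hβπ : β < Real.pi := by
    have : l * (Real.pi - α) < 1 * (Real.pi - α) :=
      mul_lt_mul_of_pos_right hl1' (by linarith)
    have h2 := this
    rw [one_mul] at h2
    linarith
  -- rewrite y in terms of g and the orthogonal part of x
  have hc1' : Real.sin ((1 - l) * (Real.pi - α)) / Real.sin (Real.pi - α)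
      = Real.sin β / Real.sin α := by
    rw [hsinθ, show (1 - l) * (Real.pi - α) = Real.pi - β by rw [hβ]; ring,
      Real.sin_pi_sub]
  have hc2' : Real.sin (l * (Real.pi - α)) / Real.sin (Real.pi - α)
      = Real.sin β / Real.sin α * c - Real.cos β := by
    rw [hsinθ, show l * (Real.pi - α) = β - α by rw [hβ]; ring, Real.sin_sub, hcosα]
    field_simp
  rw [hc1', hc2'] at hy
  have hy' : y = Real.cos β • g + (Real.sin β / Real.sin α) • (x - c • g) := by
    rw [hy]; module
  -- the orthogonal-part map q and the "pushed out" map Λ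
  set q : EuclideanSpace ℝ (Fin (n + 1)) → EuclideanSpace ℝ (Fin (n + 1)) :=
    fun w => w - ⟪g, w⟫ • g with hq
  have hqcont : Continuous q := by
    apply continuous_id.sub
    exact (continuous_const.inner continuous_id).fun_smul continuous_const
  have hqnormsq : ∀ w : EuclideanSpace ℝ (Fin (n + 1)), ‖w‖ = 1 →
      ‖q w‖ ^ 2 = 1 - ⟪g, w⟫ ^ 2 := by
    intro w hw
    rw [hq]
    simp only
    rw [norm_sub_sq_real, real_inner_smul_right, norm_smul, hw, real_inner_comm w g,
      hgnorm, Real.norm_eq_abs, mul_pow, sq_abs]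
    ring
  have hqinner : ∀ w : EuclideanSpace ℝ (Fin (n + 1)), ⟪g, q w⟫ = 0 := by
    intro w
    rw [hq]
    simp only
    rw [inner_sub_right, real_inner_smul_right, real_inner_self_eq_norm_sq, hgnorm]
    ring
  have hqx : ‖q x‖ = Real.sin α := by
    have h1 : ‖q x‖ ^ 2 = 1 - c ^ 2 := hqnormsq x hxnorm
    rw [hsinα, ← h1, Real.sqrt_sq (norm_nonneg _)]
  have hqx0 : q x ≠ 0 := by
    rw [← norm_ne_zero_iff, hqx]
    exact hsinα0.ne'
  set Λ : EuclideanSpace ℝ (Fin (n + 1)) → EuclideanSpace ℝ (Fin (n + 1)) :=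
    fun w => Real.cos β • g + (Real.sin β * ‖q w‖⁻¹) • q w with hΛ
  have hΛx : Λ x = y := by
    show Real.cos β • g + (Real.sin β * ‖q x‖⁻¹) • q x = y
    have hqxe : q x = x - c • g := by simp only [hq, hc]
    rw [hqx, hqxe, hy', div_eq_mul_inv]
  -- the interior witness at y
  obtain ⟨hyS, V, hVopen, hyV, hVA⟩ := hy2
  -- the open set S where q ≠ 0
  set S : Set (EuclideanSpace ℝ (Fin (n + 1))) := {w | q w ≠ 0} with hS
  have hSopen : IsOpen S := by
    have : S = q ⁻¹' ({0}ᶜ) := rfl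
    rw [this]
    exact isOpen_compl_singleton.preimage hqcont
  have hΛcont : ContinuousOn Λ S := by
    apply ContinuousOn.add continuousOn_const
    apply ContinuousOn.fun_smul
    · exact continuousOn_const.mul ((hqcont.norm.continuousOn).inv₀
        (fun w hw => norm_ne_zero_iff.mpr hw))
    · exact hqcont.continuousOn
  -- the neighborhood U of x
  set U : Set (EuclideanSpace ℝ (Fin (n + 1))) :=
    (S ∩ Λ ⁻¹' V) ∩ {w | Real.cos β < ⟪g, w⟫} with hU
  have hUopen : IsOpen U := by
    apply IsOpen.inter
    · exact hΛcont.isOpen_inter_preimage hSopen hVopen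
    · exact isOpen_lt continuous_const (continuous_const.inner continuous_id)
  have hxU : x ∈ U := by
    refine ⟨⟨hqx0, ?_⟩, ?_⟩
    · rw [Set.mem_preimage, hΛx]; exact hyV
    · show Real.cos β < c
      rw [← hcosα]
      exact Real.cos_lt_cos_of_nonneg_of_le_pi hα0.le hβπ.le hαβ
  -- all sphere points of U are in A
  have hUA : U ∩ unitSphere n ⊆ A := by
    rintro w ⟨⟨⟨hwS, hwV⟩, hwc⟩, hwSn⟩
    have hwnorm : ‖w‖ = 1 := mem_sphere_zero_iff_norm.mp hwSn
    set d : ℝ := ⟪g, w⟫ with hd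
    have hdabs : |d| ≤ 1 := by
      have := abs_real_inner_le_norm g w
      rwa [hgnorm, hwnorm, one_mul] at this
    set a : ℝ := Real.arccos d with ha
    have hcosa : Real.cos a = d := Real.cos_arccos (abs_le.mp hdabs).1 (abs_le.mp hdabs).2
    have ha0 : 0 ≤ a := Real.arccos_nonneg d
    have haπ : a ≤ Real.pi := Real.arccos_le_pi d
    have haβ : a < β := by
      by_contra h
      push_neg at h
      have := Real.cos_le_cos_of_nonneg_of_le_pi hβ0.le haπ h
      rw [hcosa] at this
      exact absurd hwc (not_lt.mpr this)
    have hqw0 : q w ≠ 0 := hwS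
    have hqwnorm : ‖q w‖ = Real.sin a := by
      have h1 : ‖q w‖ ^ 2 = 1 - d ^ 2 := hqnormsq w hwnorm
      rw [ha, Real.sin_arccos, ← h1, Real.sqrt_sq (norm_nonneg _)]
    have hqwpos : 0 < ‖q w‖ := norm_pos_iff.mpr hqw0
    -- Λ w is on the sphere
    have hΛwinner : ⟪g, Λ w⟫ = Real.cos β := by
      rw [hΛ]
      simp only
      rw [inner_add_right, real_inner_smul_right, real_inner_smul_right,
        real_inner_self_eq_norm_sq, hgnorm, hqinner w]
      ring
    have hsinβpos : 0 < Real.sin β := Real.sin_pos_of_pos_of_lt_pi hβ0 hβπ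
    have hΛwnorm : ‖Λ w‖ = 1 := by
      have e1 : ⟪Real.cos β • g, (Real.sin β * ‖q w‖⁻¹) • q w⟫ = 0 := by
        rw [real_inner_smul_left, real_inner_smul_right, hqinner w]
        ring
      have hnorm2 : ‖(Real.sin β * ‖q w‖⁻¹) • q w‖ = Real.sin β := by
        rw [norm_smul, Real.norm_eq_abs, abs_mul, abs_of_pos hsinβpos, abs_inv,
          abs_norm]
        field_simp
      have h2 : ‖Λ w‖ ^ 2 = 1 := by
        rw [hΛ]
        simp only
        rw [norm_add_sq_real, e1, hnorm2, norm_smul, hgnorm, Real.norm_eq_abs,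
          mul_one, sq_abs]
        linarith [Real.sin_sq_add_cos_sq β]
      have h3 : |‖Λ w‖| = 1 := by
        rw [← Real.sqrt_sq_eq_abs, h2, Real.sqrt_one]
      rwa [abs_of_nonneg (norm_nonneg _)] at h3
    have hΛwA : Λ w ∈ A := hVA ⟨hwV, mem_sphere_zero_iff_norm.mpr hΛwnorm⟩
    -- w lies on the geodesic from g to Λ w
    have hkey : w = Real.cos a • g
        + (Real.sin a / Real.sin β) • (Λ w - Real.cos β • g) := by
      have h4 : Λ w - Real.cos β • g = (Real.sin β * ‖q w‖⁻¹) • q w := by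
        rw [hΛ]; simp only; abel
      rw [h4, smul_smul]
      have hsinβ0 : Real.sin β ≠ 0 :=
        (Real.sin_pos_of_pos_of_lt_pi hβ0 hβπ).ne'
      have h5 : Real.sin a / Real.sin β * (Real.sin β * ‖q w‖⁻¹) = 1 := by
        rw [← hqwnorm]
        field_simp
      rw [h5, one_smul, hcosa, hq]
      simp only
      abel
    rw [hkey]
    exact hgStar (Λ w) hΛwA
      (mem_sphGeodesic_of g (Λ w) hgnorm β a hβ0 hβπ ha0 haβ.le hΛwinner)
  exact hxnI ⟨hxS, U, hUopen, hxU, hUA⟩
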